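/- Let ε ∈ {−1, +1} and let f : ℝ³ → (0,∞) be continuous, with f(p) < 1 for all p in the case ε = −1. Suppose that for all p, p_*, p', p'_* ∈ ℝ³ with p + p_* = p' + p'_* and |p|² + |p_*|² = |p'|² + |p'_*|² one has (f(p')/(1+εf(p'))) · (f(p'_*)/(1+εf(p'_*))) = (f(p)/(1+εf(p))) · (f(p_*)/(1+εf(p_*))). Then there exist a ∈ ℝ, b ∈ ℝ³, c ∈ ℝ such that, with M(p) = exp(a + b·p + c|p|²), one has εM(p) < 1 and f(p) = M(p)/(1 − εM(p)) for all p ∈ ℝ³; i.e., f is a Planckian (Bose–Einstein distribution for ε = 1, Fermi–Dirac distribution for ε = −1). -/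

import Mathlib

open MeasureTheory Metric Set
open scoped RealInnerProductSpace

noncomputable section

local notation "E3" => EuclideanSpace ℝ (Fin 3)

lemma exists_unit_orthogonal (x y : E3) :
    ∃ z : E3, ‖z‖ = 1 ∧ ⟪x, z⟫ = 0 ∧ ⟪y, z⟫ = 0 := by
  classical
  set K : Submodule ℝ E3 := Submodule.span ℝ (↑({x, y} : Finset E3)) with hKdef
  have hK2 : Module.finrank ℝ K ≤ 2 := by
    have h := finrank_span_finset_le_card (R := ℝ) ({x, y} : Finset E3)
    have hc : ({x, y} : Finset E3).card ≤ 2 := by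
      apply Finset.card_insert_le _ _ |>.trans; simp
    simpa [Set.finrank, hKdef] using h.trans hc
  have hsum : Module.finrank ℝ K + Module.finrank ℝ Kᗮ = 3 := by
    rw [K.finrank_add_finrank_orthogonal, finrank_euclideanSpace_fin]
  have hpos : Kᗮ ≠ ⊥ := by
    intro hbot
    rw [hbot, finrank_bot] at hsum
    omega
  obtain ⟨z, hzK, hz0⟩ := Submodule.exists_mem_ne_zero_of_ne_bot hpos
  refine ⟨‖z‖⁻¹ • z, norm_smul_inv_norm hz0, ?_, ?_⟩
  · rw [real_inner_smul_right]
    have : ⟪x, z⟫ = 0 := (Submodule.mem_orthogonal K z).mp hzK x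
      (Submodule.subset_span (by simp))
    rw [this, mul_zero]
  · rw [real_inner_smul_right]
    have : ⟪y, z⟫ = 0 := (Submodule.mem_orthogonal K z).mp hzK y
      (Submodule.subset_span (by simp))
    rw [this, mul_zero]


lemma even_eq_of_norm_eq (e : E3 → ℝ) (heven : ∀ p, e (-p) = e p)
    (hadd : ∀ u v : E3, ⟪u, v⟫ = 0 → e (u + v) = e u + e v) :
    ∀ x y : E3, ‖x‖ = ‖y‖ → e x = e y := by
  have step : ∀ u v : E3, ⟪u, v⟫ = 0 → ‖u‖ = ‖v‖ → e u = e v := by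
    intro u v huv hn
    set p : E3 := (1/2 : ℝ) • (u + v) with hp
    set q : E3 := (1/2 : ℝ) • (u - v) with hq
    have hpq : ⟪p, q⟫ = 0 := by
      rw [hp, hq, real_inner_smul_left, real_inner_smul_right]
      have : ⟪u + v, u - v⟫ = (0:ℝ) := by
        have h1 : ⟪u + v, u - v⟫ = ‖u‖^2 - ‖v‖^2 := by
          rw [inner_sub_right, inner_add_left, inner_add_left,
            real_inner_self_eq_norm_sq, real_inner_self_eq_norm_sq,
            real_inner_comm v u]
          ring
        rw [h1, hn]; ring
      rw [this]; ring
    have hpq' : ⟪p, -q⟫ = 0 := by rw [inner_neg_right, hpq, neg_zero]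
    have hu : u = p + q := by rw [hp, hq]; module
    have hv : v = p + (-q) := by rw [hp, hq]; module
    rw [hu, hv, hadd p q hpq, hadd p (-q) hpq', heven]
  intro x y hn
  by_cases hx : x = 0
  · have hy : y = 0 := by
      rw [← norm_eq_zero, ← hn, hx, norm_zero]
    rw [hx, hy]
  · obtain ⟨z, hz1, hzx, hzy⟩ := exists_unit_orthogonal x y
    have hzz : ‖(‖x‖ • z : E3)‖ = ‖x‖ := by
      rw [norm_smul, hz1, mul_one, Real.norm_eq_abs, abs_of_nonneg (norm_nonneg x)]
    have e1 : e x = e (‖x‖ • z) := by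
      apply step x (‖x‖ • z) _ hzz.symm
      rw [real_inner_smul_right, hzx, mul_zero]
    have e2 : e y = e (‖x‖ • z) := by
      apply step y (‖x‖ • z) _ (by rw [hzz, hn])
      rw [real_inner_smul_right, hzy, mul_zero]
    rw [e1, e2]

lemma even_part_repr (e : E3 → ℝ) (hc : Continuous e)
    (heven : ∀ p, e (-p) = e p)
    (hadd : ∀ u v : E3, ⟪u, v⟫ = 0 → e (u + v) = e u + e v) :
    ∃ c : ℝ, ∀ p, e p = c * ‖p‖ ^ 2 := by
  have h0 : e 0 = 0 := by
    have := hadd 0 0 (by simp); simp at this; linarith [this]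
  have hnorm := even_eq_of_norm_eq e heven hadd
  set u₀ : E3 := EuclideanSpace.single 0 1 with hu0
  set u₁ : E3 := EuclideanSpace.single 1 1 with hu1
  have hn0 : ‖u₀‖ = 1 := by rw [hu0, EuclideanSpace.norm_single]; norm_num
  have hn1 : ‖u₁‖ = 1 := by rw [hu1, EuclideanSpace.norm_single]; norm_num
  have h01 : ⟪u₀, u₁⟫ = 0 := by
    rw [hu0, hu1, EuclideanSpace.inner_single_left]
    simp [EuclideanSpace.single_apply]
  set q : ℝ → ℝ := fun t => e (t • u₀) with hq
  have hqc : Continuous q := hc.comp (continuous_id.smul continuous_const)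
  have hq0 : q 0 = 0 := by simp [hq, h0]
  have hqe : ∀ x : E3, e x = q ‖x‖ := by
    intro x
    apply hnorm
    rw [norm_smul, hn0, mul_one, Real.norm_eq_abs, abs_of_nonneg (norm_nonneg x)]
  have hqeven : ∀ t : ℝ, q (-t) = q t := by
    intro t
    simp only [hq, neg_smul]
    exact heven (t • u₀)
  have hqabs : ∀ t : ℝ, q ‖t‖ = q t := by
    intro t
    rw [Real.norm_eq_abs]
    rcases abs_cases t with ⟨h, _⟩ | ⟨h, _⟩
    · rw [h]
    · rw [h, hqeven]
  have key : ∀ s t : ℝ, q (Real.sqrt (s^2 + t^2)) = q s + q t := by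
    intro s t
    have horth : ⟪s • u₀, t • u₁⟫ = 0 := by
      rw [real_inner_smul_left, real_inner_smul_right, h01]; ring
    have hns : ‖(s • u₀ + t • u₁ : E3)‖ = Real.sqrt (s^2 + t^2) := by
      rw [← Real.sqrt_sq (norm_nonneg (s • u₀ + t • u₁ : E3))]
      congr 1
      rw [norm_add_sq_real, horth, norm_smul, norm_smul, hn0, hn1]
      simp [Real.norm_eq_abs, sq_abs]
    have h2 := hadd _ _ horth
    rw [hqe (s • u₀ + t • u₁), hns] at h2
    rw [h2, hqe (s • u₀), hqe (t • u₁), norm_smul, norm_smul, hn0, hn1,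
      mul_one, mul_one, hqabs, hqabs]
  set Q : ℝ → ℝ := fun r => q (Real.sqrt r) with hQ
  have hQc : Continuous Q := hqc.comp Real.continuous_sqrt
  have hQ0 : ∀ r : ℝ, r ≤ 0 → Q r = 0 := by
    intro r hr
    simp only [hQ]
    rw [Real.sqrt_eq_zero'.mpr hr, hq0]
  have hQadd : ∀ s t : ℝ, 0 ≤ s → 0 ≤ t → Q (s + t) = Q s + Q t := by
    intro s t hs ht
    have := key (Real.sqrt s) (Real.sqrt t)
    rw [Real.sq_sqrt hs, Real.sq_sqrt ht] at this
    simpa [hQ] using this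
  set Qt : ℝ → ℝ := fun r => Q r - Q (-r) with hQt
  have hQtc : Continuous Qt := hQc.sub (hQc.comp continuous_neg)
  have hQt_add : ∀ x y : ℝ, Qt (x + y) = Qt x + Qt y := by
    intro x y
    simp only [hQt, neg_add]
    rcases le_total 0 x with hx | hx <;> rcases le_total 0 y with hy | hy <;>
      rcases le_total 0 (x + y) with hxy | hxy
    · rw [hQadd x y hx hy, hQ0 (-x) (by linarith), hQ0 (-y) (by linarith),
        hQ0 (-x + -y) (by linarith)]
      ring
    · have hx0 : x = 0 := by linarith
      have hy0 : y = 0 := by linarith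
      simp [hx0, hy0]
    · -- x ≥ 0, y ≤ 0, x + y ≥ 0 : x = (x+y) + (-y)
      have h1 := hQadd (x + y) (-y) hxy (by linarith)
      have h2 : x + y + -y = x := by ring
      rw [h2] at h1
      rw [hQ0 (-x) (by linarith), hQ0 y hy, hQ0 (-x + -y) (by linarith)]
      linarith
    · -- x ≥ 0, y ≤ 0, x + y ≤ 0 : -y = (-(x+y)) + x
      have h1 := hQadd (-(x+y)) x (by linarith) hx
      have h2 : -(x+y) + x = -y := by ring
      rw [h2] at h1
      rw [hQ0 (-x) (by linarith), hQ0 y hy, hQ0 (x + y) hxy]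
      have h3 : -x + -y = -(x+y) := by ring
      rw [h3]
      linarith
    · -- x ≤ 0, y ≥ 0, x + y ≥ 0 : y = (x+y) + (-x)
      have h1 := hQadd (x + y) (-x) hxy (by linarith)
      have h2 : x + y + -x = y := by ring
      rw [h2] at h1
      rw [hQ0 x hx, hQ0 (-y) (by linarith), hQ0 (-x + -y) (by linarith)]
      linarith
    · -- x ≤ 0, y ≥ 0, x + y ≤ 0 : -x = (-(x+y)) + y
      have h1 := hQadd (-(x+y)) y (by linarith) hy
      have h2 : -(x+y) + y = -x := by ring
      rw [h2] at h1
      rw [hQ0 x hx, hQ0 (-y) (by linarith), hQ0 (x + y) hxy]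
      have h3 : -x + -y = -(x+y) := by ring
      rw [h3]
      linarith
    · have hx0 : x = 0 := by linarith
      have hy0 : y = 0 := by linarith
      simp [hx0, hy0]
    · have h1 := hQadd (-x) (-y) (by linarith) (by linarith)
      rw [hQ0 x hx, hQ0 y hy, hQ0 (x + y) hxy]
      linarith
  set F : ℝ →+ ℝ := AddMonoidHom.mk' Qt hQt_add with hF
  have hL := (F.toRealLinearMap hQtc).map_smul
  refine ⟨Qt 1, fun p => ?_⟩
  have h1 : e p = Q (‖p‖^2) := by
    rw [hqe p]
    simp only [hQ]
    rw [Real.sqrt_sq (norm_nonneg p)]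
  have h2 : Qt (‖p‖^2) = Q (‖p‖^2) := by
    simp only [hQt]
    rw [hQ0 (-‖p‖^2) (neg_nonpos.mpr (by positivity)), sub_zero]
  have h3 : Qt (‖p‖^2) = ‖p‖^2 • Qt 1 := by
    have := hL (‖p‖^2) 1
    simpa [hF, smul_eq_mul] using this
  rw [h1, ← h2, h3, smul_eq_mul]
  ring


lemma odd_part_repr (o : E3 → ℝ) (hc : Continuous o)
    (hodd : ∀ p, o (-p) = - o p)
    (hadd : ∀ u v : E3, ⟪u, v⟫ = 0 → o (u + v) = o u + o v) :
    ∃ b : E3, ∀ p, o p = ⟪b, p⟫ := by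
  have h0 : o 0 = 0 := by
    have := hodd 0; rw [neg_zero] at this; linarith
  have line1 : ∀ (u : E3) (s t : ℝ), 0 ≤ s * t →
      o ((s + t) • u) = o (s • u) + o (t • u) := by
    intro u s t hst
    by_cases hu : u = 0
    · simp [hu, h0]
    obtain ⟨z, hz1, hzu, -⟩ := exists_unit_orthogonal u u
    set v : E3 := (Real.sqrt (s * t) * ‖u‖) • z with hv
    have hnv2 : ‖v‖ ^ 2 = s * t * ‖u‖ ^ 2 := by
      rw [hv, norm_smul, hz1, mul_one, Real.norm_eq_abs,
        abs_of_nonneg (by positivity), mul_pow, Real.sq_sqrt hst]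
    have huv : ⟪u, v⟫ = 0 := by
      rw [hv, real_inner_smul_right, hzu, mul_zero]
    have hA : ⟪s • u, v⟫ = 0 := by rw [real_inner_smul_left, huv, mul_zero]
    have hB : ⟪t • u, -v⟫ = 0 := by
      rw [inner_neg_right, real_inner_smul_left, huv]; ring
    have hvu : ⟪v, u⟫ = 0 := by rw [real_inner_comm]; exact huv
    have hAB : ⟪s • u + v, t • u - v⟫ = 0 := by
      simp only [inner_add_left, inner_sub_right, real_inner_smul_left,
        real_inner_smul_right, huv, hvu, real_inner_self_eq_norm_sq, hnv2]
      ring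
    have e1 : o ((s + t) • u) = o (s • u + v) + o (t • u - v) := by
      have hsum : (s + t) • u = (s • u + v) + (t • u - v) := by module
      rw [hsum]; exact hadd _ _ hAB
    have e2 : o (s • u + v) = o (s • u) + o v := hadd _ _ hA
    have e3 : o (t • u - v) = o (t • u) - o v := by
      have h4 : t • u - v = t • u + (-v) := by abel
      rw [h4, hadd _ _ hB, hodd]; ring
    rw [e1, e2, e3]; ring
  have line : ∀ (u : E3) (s t : ℝ), o ((s + t) • u) = o (s • u) + o (t • u) := by
    have key2 : ∀ (u : E3) (s t : ℝ), 0 < s → t < 0 →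
        o ((s + t) • u) = o (s • u) + o (t • u) := by
      intro u s t hs ht
      have hodd' : ∀ r : ℝ, o ((-r) • u) = - o (r • u) := by
        intro r; rw [neg_smul, hodd]
      rcases le_or_gt 0 (s + t) with hst | hst
      · have h1 := line1 u (s + t) (-t) (by nlinarith)
        rw [show s + t + -t = s by ring] at h1
        rw [hodd'] at h1
        linarith
      · have h1 := line1 u (-(s + t)) s (by nlinarith)
        rw [show -(s + t) + s = -t by ring] at h1
        rw [hodd', hodd'] at h1
        linarith
    intro u s t
    rcases le_or_gt 0 (s * t) with h | h
    · exact line1 u s t h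
    · rcases mul_neg_iff.mp h with ⟨hs, ht⟩ | ⟨hs, ht⟩
      · exact key2 u s t hs ht
      · rw [add_comm s t, key2 u t s ht hs, add_comm]
  have haddfull : ∀ x y : E3, o (x + y) = o x + o y := by
    intro x y
    by_cases hx : x = 0
    · simp [hx, h0]
    have hnx : ‖x‖ ≠ 0 := norm_ne_zero_iff.mpr hx
    set t : ℝ := ⟪x, y⟫ / ‖x‖ ^ 2 with ht
    set w : E3 := y - t • x with hw
    have hxw : ⟪x, w⟫ = 0 := by
      rw [hw, inner_sub_right, real_inner_smul_right,
        real_inner_self_eq_norm_sq, ht,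
        div_mul_cancel₀ _ (pow_ne_zero 2 hnx), sub_self]
    have hy : y = t • x + w := by rw [hw]; abel
    have h1 : o (x + y) = o ((1 + t) • x) + o w := by
      have hss : x + y = (1 + t) • x + w := by rw [hw]; module
      rw [hss]
      exact hadd _ _ (by rw [real_inner_smul_left, hxw, mul_zero])
    have h2 : o ((1 + t) • x) = o x + o (t • x) := by
      have := line x 1 t
      rwa [one_smul] at this
    have h3 : o y = o (t • x) + o w := by
      rw [hy]
      exact hadd _ _ (by rw [real_inner_smul_left, hxw, mul_zero])
    rw [h1, h2, h3]; ring
  set F : E3 →+ ℝ := AddMonoidHom.mk' o haddfull with hF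
  set L := F.toRealLinearMap hc with hL
  refine ⟨(InnerProductSpace.toDual ℝ (EuclideanSpace ℝ (Fin 3))).symm L, fun p => ?_⟩
  rw [InnerProductSpace.toDual_symm_apply]
  rw [hL]
  rfl

lemma orth_repr (H : E3 → ℝ) (hc : Continuous H)
    (hadd : ∀ u v : E3, ⟪u, v⟫ = 0 → H (u + v) = H u + H v) :
    ∃ (b : E3) (c : ℝ), ∀ p, H p = ⟪b, p⟫ + c * ‖p‖ ^ 2 := by
  set e : E3 → ℝ := fun p => (H p + H (-p)) / 2 with he
  set o : E3 → ℝ := fun p => (H p - H (-p)) / 2 with ho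
  have hec : Continuous e := (hc.add (hc.comp continuous_neg)).div_const 2
  have hoc : Continuous o := (hc.sub (hc.comp continuous_neg)).div_const 2
  have heeven : ∀ p, e (-p) = e p := by
    intro p; simp only [he, neg_neg]; ring
  have hoodd : ∀ p, o (-p) = - o p := by
    intro p; simp only [ho, neg_neg]; ring
  have headd : ∀ u v : E3, ⟪u, v⟫ = 0 → e (u + v) = e u + e v := by
    intro u v h
    have h2 := hadd (-u) (-v) (by rw [inner_neg_neg]; exact h)
    simp only [he, neg_add, hadd u v h, h2]
    ring
  have hoadd : ∀ u v : E3, ⟪u, v⟫ = 0 → o (u + v) = o u + o v := by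
    intro u v h
    have h2 := hadd (-u) (-v) (by rw [inner_neg_neg]; exact h)
    simp only [ho, neg_add, hadd u v h, h2]
    ring
  obtain ⟨c, hce⟩ := even_part_repr e hec heeven headd
  obtain ⟨b, hbo⟩ := odd_part_repr o hoc hoodd hoadd
  refine ⟨b, c, fun p => ?_⟩
  have : H p = o p + e p := by simp only [he, ho]; ring
  rw [this, hbo, hce]

theorem planckian_of_NB_equilibrium
    (ε : ℝ) (hε : ε = -1 ∨ ε = 1)
    (f : EuclideanSpace ℝ (Fin 3) → ℝ)
    (hfpos : ∀ p, 0 < f p)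
    (hfcont : Continuous f)
    (hferm : ε = -1 → ∀ p, f p < 1)
    (hcoll : ∀ p ps p' ps' : EuclideanSpace ℝ (Fin 3),
      p + ps = p' + ps' → ‖p‖ ^ 2 + ‖ps‖ ^ 2 = ‖p'‖ ^ 2 + ‖ps'‖ ^ 2 →
      (f p' / (1 + ε * f p')) * (f ps' / (1 + ε * f ps'))
        = (f p / (1 + ε * f p)) * (f ps / (1 + ε * f ps))) :
    ∃ (a : ℝ) (b : EuclideanSpace ℝ (Fin 3)) (c : ℝ),
      ∀ p, ε * Real.exp (a + inner ℝ b p + c * ‖p‖ ^ 2) < 1 ∧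
        f p = Real.exp (a + inner ℝ b p + c * ‖p‖ ^ 2)
                / (1 - ε * Real.exp (a + inner ℝ b p + c * ‖p‖ ^ 2)) := by
  have hεf : ∀ p, 0 < 1 + ε * f p := by
    intro p
    rcases hε with h | h
    · have := hferm h p; rw [h]; linarith
    · have := hfpos p; rw [h]; linarith
  set g : E3 → ℝ := fun p => f p / (1 + ε * f p) with hg
  have hgpos : ∀ p, 0 < g p := fun p => div_pos (hfpos p) (hεf p)
  have hgc : Continuous g :=
    hfcont.div (continuous_const.add (continuous_const.mul hfcont))
      (fun p => (hεf p).ne')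
  set φ : E3 → ℝ := fun p => Real.log (g p) with hφ
  have hφc : Continuous φ := hgc.log (fun p => (hgpos p).ne')
  have hmul : ∀ u v : E3, ⟪u, v⟫ = 0 → g u * g v = g (u + v) * g 0 := by
    intro u v h
    have hmom : (u + v) + 0 = u + v := by rw [add_zero]
    have hen : ‖u + v‖ ^ 2 + ‖(0 : E3)‖ ^ 2 = ‖u‖ ^ 2 + ‖v‖ ^ 2 := by
      rw [norm_zero, norm_add_sq_real, h]
      ring
    exact hcoll (u + v) 0 u v hmom hen
  set H : E3 → ℝ := fun p => φ p - φ 0 with hH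
  have hHc : Continuous H := hφc.sub continuous_const
  have hHadd : ∀ u v : E3, ⟪u, v⟫ = 0 → H (u + v) = H u + H v := by
    intro u v h
    have h1 := hmul u v h
    have h2 : φ u + φ v = φ (u + v) + φ 0 := by
      simp only [hφ]
      rw [← Real.log_mul (hgpos u).ne' (hgpos v).ne',
        ← Real.log_mul (hgpos (u + v)).ne' (hgpos 0).ne', h1]
    simp only [hH]
    linarith
  obtain ⟨b, c, hbc⟩ := orth_repr H hHc hHadd
  refine ⟨φ 0, b, c, fun p => ?_⟩
  have hφp : φ 0 + inner ℝ b p + c * ‖p‖ ^ 2 = φ p := by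
    have := hbc p
    simp only [hH] at this
    linarith
  have hexp : Real.exp (φ 0 + inner ℝ b p + c * ‖p‖ ^ 2) = g p := by
    rw [hφp, hφ, Real.exp_log (hgpos p)]
  rw [hexp]
  constructor
  · have h1 : ε * g p = (ε * f p) / (1 + ε * f p) := by
      simp only [hg]; ring
    rw [h1, div_lt_one (hεf p)]
    linarith
  · have hd : (1 : ℝ) - ε * g p = 1 / (1 + ε * f p) := by
      simp only [hg]
      have h1 : (f p / (1 + ε * f p)) * (1 + ε * f p) = f p :=
        div_mul_cancel₀ _ (hεf p).ne'
      rw [eq_div_iff (hεf p).ne', sub_mul, one_mul, mul_assoc, h1]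
      ring
    rw [hd, div_div_eq_mul_div, div_one]
    simp only [hg]
    rw [div_mul_cancel₀ _ (hεf p).ne']
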